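/- Let I(μ)=K(μ_sc|μ)+Σ_{λ∈E(μ)}F(λ) for μ∈S_1([−2,2]) and I(μ)=+∞ for compactly supported probability measures μ∉S_1([−2,2]). Then I(μ)=0 if and only if μ=μ_sc. -/

import Mathlib

open MeasureTheory ProbabilityTheory Filter Topology Polynomial
open scoped ENNReal NNReal

noncomputable section

/-- The semicircle law on `[-2,2]`, with Lebesgue density `√(4-x²)/(2π)`. -/
def semicircle : Measure ℝ :=
  volume.withDensity (fun x => ENNReal.ofReal
    (if x ∈ Set.Icc (-2 : ℝ) 2 then Real.sqrt (4 - x ^ 2) / (2 * Real.pi) else 0))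

/-- The `k`-th moment of the semicircle law. -/
def mSc (k : ℕ) : ℝ := ∫ x, x ^ k ∂semicircle

/-- The space of compactly supported probability measures on `ℝ`, carrying the topology of
weak convergence (inherited from `ProbabilityMeasure ℝ`). -/
abbrev CPM : Type := {μ : ProbabilityMeasure ℝ // ∃ K : Set ℝ, IsCompact K ∧ (μ : Measure ℝ) Kᶜ = 0}

/-- The (topological) support of a measure on `ℝ`: points all of whose neighborhoods have
positive measure. -/
def msupport (μ : Measure ℝ) : Set ℝ := {x | ∀ U ∈ nhds x, μ U ≠ 0}

/-- The essential support outside `[-2,2]`. -/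
def Eset (μ : Measure ℝ) : Set ℝ := msupport μ \ Set.Icc (-2) 2

/-- `μ ∈ S_1([-2,2])`: the support of `μ` is `[-2,2] ∪ E(μ)` with `E(μ)` an at most countable
subset of `ℝ \ [-2,2]`. -/
def inS1 (μ : Measure ℝ) : Prop :=
  Set.Icc (-2 : ℝ) 2 ⊆ msupport μ ∧ (Eset μ).Countable

/-- `F(x) = ∫_2^{|x|} √(y² - 4) dy`. -/
def Fout (x : ℝ) : ℝ := ∫ y in (2 : ℝ)..|x|, Real.sqrt (y ^ 2 - 4)

-- The Kullback–Leibler divergence `K(ν|μ) = ∫ log(dν/dμ) dν` if `ν ≪ μ` (and the integral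
-- exists), and `+∞` otherwise.
open Classical in
def KLdiv (ν μ : Measure ℝ) : ℝ≥0∞ :=
  if ν ≪ μ ∧ Integrable (fun x => Real.log (ν.rnDeriv μ x).toReal) ν then
    ENNReal.ofReal (∫ x, Real.log (ν.rnDeriv μ x).toReal ∂ν)
  else ⊤

-- The rate function `I(μ) = K(μ_sc|μ) + Σ_{λ ∈ E(μ)} F(λ)` for `μ ∈ S_1([-2,2])`,
-- and `I(μ) = +∞` otherwise.
open Classical in
def rateSpec (μ : Measure ℝ) : ℝ≥0∞ :=
  if inS1 μ then KLdiv semicircle μ + ∑' x : (Eset μ), ENNReal.ofReal (Fout x) else ⊤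

set_option linter.unreachableTactic false
set_option linter.unusedTactic false

lemma scd_meas : Measurable (fun x : ℝ => ENNReal.ofReal
    (if x ∈ Set.Icc (-2 : ℝ) 2 then Real.sqrt (4 - x ^ 2) / (2 * Real.pi) else 0)) := by
  apply Measurable.ennreal_ofReal
  apply Measurable.ite measurableSet_Icc _ measurable_const
  fun_prop

lemma integral_sqrt_four_sub_sq : ∫ x in (-2:ℝ)..2, Real.sqrt (4 - x^2) = 2 * Real.pi := by
  have h := intervalIntegral.integral_comp_mul_left (a := (-1:ℝ)) (b := 1)
      (fun x => Real.sqrt (4 - x^2)) (c := (2:ℝ)) two_ne_zero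
  have h2 : ∀ x : ℝ, Real.sqrt (4 - (2*x)^2) = 2 * Real.sqrt (1 - x^2) := by
    intro x
    rw [show (4 : ℝ) - (2*x)^2 = 2^2 * (1 - x^2) by ring,
      Real.sqrt_mul (by positivity), Real.sqrt_sq (by norm_num)]
  simp only [h2] at h
  rw [intervalIntegral.integral_const_mul, integral_sqrt_one_sub_sq] at h
  norm_num at h
  linarith [Real.pi_pos]

instance semicircle_prob : IsProbabilityMeasure semicircle := by
  constructor
  rw [semicircle, withDensity_apply _ MeasurableSet.univ, setLIntegral_univ]
  have hind : (fun x : ℝ => ENNReal.ofReal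
      (if x ∈ Set.Icc (-2 : ℝ) 2 then Real.sqrt (4 - x ^ 2) / (2 * Real.pi) else 0))
      = (Set.Icc (-2:ℝ) 2).indicator
        (fun x => ENNReal.ofReal (Real.sqrt (4 - x ^ 2) / (2 * Real.pi))) := by
    funext x
    rw [Set.indicator_apply]
    split_ifs <;> simp
  rw [hind, lintegral_indicator measurableSet_Icc]
  have hcont : Continuous (fun x : ℝ => Real.sqrt (4 - x ^ 2) / (2 * Real.pi)) := by
    fun_prop
  have hint : IntegrableOn (fun x : ℝ => Real.sqrt (4 - x ^ 2) / (2 * Real.pi))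
      (Set.Icc (-2:ℝ) 2) volume := hcont.integrableOn_Icc
  rw [← ofReal_integral_eq_lintegral_ofReal hint]
  · rw [show ∫ x in Set.Icc (-2:ℝ) 2, Real.sqrt (4 - x ^ 2) / (2 * Real.pi) ∂volume
        = ∫ x in (-2:ℝ)..2, Real.sqrt (4 - x ^ 2) / (2 * Real.pi) by
      rw [intervalIntegral.integral_of_le (by norm_num : (-2:ℝ) ≤ 2),
        MeasureTheory.integral_Icc_eq_integral_Ioc]]
    rw [intervalIntegral.integral_div, integral_sqrt_four_sub_sq,
      div_self (by positivity : (2:ℝ) * Real.pi ≠ 0)]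
    exact ENNReal.ofReal_one
  · exact Eventually.of_forall fun x => by positivity

lemma semicircle_compl_Icc : semicircle (Set.Icc (-2:ℝ) 2)ᶜ = 0 := by
  rw [semicircle, withDensity_apply _ measurableSet_Icc.compl]
  rw [setLIntegral_congr_fun measurableSet_Icc.compl
    (fun x hx => ?_), lintegral_zero]
  rw [if_neg hx]
  simp

lemma msupport_semicircle_subset : msupport semicircle ⊆ Set.Icc (-2:ℝ) 2 := by
  intro x hx
  by_contra hxn
  exact hx (Set.Icc (-2:ℝ) 2)ᶜ (isClosed_Icc.isOpen_compl.mem_nhds hxn) semicircle_compl_Icc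

lemma semicircle_Ioo_pos {a b : ℝ} (ha : -2 < a) (hab : a < b) (hb : b < 2) :
    semicircle (Set.Ioo a b) ≠ 0 := by
  set M : ℝ := max |a| |b| with hM
  have hM2 : M < 2 := max_lt (abs_lt.2 ⟨by linarith, by linarith⟩)
    (abs_lt.2 ⟨by linarith, by linarith⟩)
  have hM0 : 0 ≤ M := le_trans (abs_nonneg a) (le_max_left _ _)
  have hs : 0 < Real.sqrt (4 - M^2) := Real.sqrt_pos.2 (by nlinarith)
  have hc0 : 0 < Real.sqrt (4 - M^2) / (2 * Real.pi) := by positivity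
  have hbound : ∀ y ∈ Set.Ioo a b,
      ENNReal.ofReal (Real.sqrt (4 - M^2) / (2 * Real.pi)) ≤ ENNReal.ofReal
        (if y ∈ Set.Icc (-2:ℝ) 2 then Real.sqrt (4 - y^2) / (2 * Real.pi) else 0) := by
    intro y hy
    have hyM : |y| ≤ M := by
      rcases le_or_gt 0 y with h | h
      · rw [abs_of_nonneg h]
        calc y ≤ b := hy.2.le
        _ ≤ |b| := le_abs_self b
        _ ≤ M := le_max_right _ _
      · rw [abs_of_neg h]
        calc -y ≤ -a := by linarith [hy.1]
        _ ≤ |a| := neg_le_abs a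
        _ ≤ M := le_max_left _ _
    have hyIcc : y ∈ Set.Icc (-2:ℝ) 2 := by
      have := abs_le.1 (hyM.trans hM2.le)
      exact ⟨this.1, this.2⟩
    rw [if_pos hyIcc]
    apply ENNReal.ofReal_le_ofReal
    have hsq : y^2 ≤ M^2 := by nlinarith [sq_abs y, sq_abs M, abs_nonneg y]
    gcongr <;> nlinarith
  have hge : ENNReal.ofReal (Real.sqrt (4 - M^2) / (2 * Real.pi)) * volume (Set.Ioo a b)
      ≤ semicircle (Set.Ioo a b) := by
    rw [semicircle, withDensity_apply _ measurableSet_Ioo, ← setLIntegral_const]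
    exact setLIntegral_mono' measurableSet_Ioo hbound
  intro h0
  rw [h0] at hge
  rw [Real.volume_Ioo] at hge
  have h1 : ENNReal.ofReal (Real.sqrt (4 - M^2) / (2 * Real.pi)) * ENNReal.ofReal (b - a) ≠ 0 :=
    mul_ne_zero (by simp [ENNReal.ofReal_eq_zero]; linarith)
      (by simp [ENNReal.ofReal_eq_zero]; linarith)
  exact h1 (le_antisymm (le_of_le_of_eq hge rfl) zero_le)

lemma Icc_subset_msupport_sc : Set.Icc (-2:ℝ) 2 ⊆ msupport semicircle := by
  intro x hx U hU
  obtain ⟨ε, hε, hball⟩ := Metric.mem_nhds_iff.1 hU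
  set δ : ℝ := min (ε/4) (1/2) with hδdef
  have hδ0 : 0 < δ := lt_min (by linarith) (by norm_num)
  have hδ1 : δ ≤ 1/2 := min_le_right _ _
  have hδε : δ ≤ ε/4 := min_le_left _ _
  set c : ℝ := x * (1 - δ) with hcdef
  have hx2 : |x| ≤ 2 := abs_le.2 ⟨hx.1, hx.2⟩
  have hc2 : |c| < 2 := by
    rw [hcdef, abs_mul, abs_of_pos (show (0:ℝ) < 1 - δ by linarith)]
    calc |x| * (1-δ) ≤ 2 * (1-δ) := mul_le_mul_of_nonneg_right hx2 (by linarith)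
    _ < 2 := by nlinarith
  have hcball : c ∈ Metric.ball x ε := by
    rw [Metric.mem_ball, Real.dist_eq, hcdef]
    rw [show x * (1 - δ) - x = -(x * δ) by ring, abs_neg, abs_mul, abs_of_pos hδ0]
    calc |x| * δ ≤ 2 * δ := mul_le_mul_of_nonneg_right hx2 hδ0.le
    _ ≤ 2 * (ε/4) := by linarith
    _ < ε := by linarith
  have hopen : Metric.ball x ε ∩ Set.Ioo (-2:ℝ) 2 ∈ nhds c :=
    (Metric.isOpen_ball.inter isOpen_Ioo).mem_nhds
      ⟨hcball, (abs_lt.1 hc2).1, (abs_lt.1 hc2).2⟩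
  obtain ⟨l, u, hc_mem, hsub⟩ := mem_nhds_iff_exists_Ioo_subset.1 hopen
  have hl : l < c := hc_mem.1
  have hu : c < u := hc_mem.2
  set l' : ℝ := (l + c)/2 with hl'def
  set u' : ℝ := (c + u)/2 with hu'def
  have hl'mem : l' ∈ Set.Ioo (-2:ℝ) 2 := (hsub ⟨by simp only [hl'def]; linarith,
    by simp only [hl'def]; linarith⟩).2
  have hu'mem : u' ∈ Set.Ioo (-2:ℝ) 2 := (hsub ⟨by simp only [hu'def]; linarith,
    by simp only [hu'def]; linarith⟩).2
  have hne : semicircle (Set.Ioo l' u') ≠ 0 :=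
    semicircle_Ioo_pos hl'mem.1 (by simp only [hl'def, hu'def]; linarith) hu'mem.2
  intro h0
  apply hne
  apply measure_mono_null _ h0
  intro y hy
  apply hball
  have : y ∈ Set.Ioo l u := ⟨by have := hy.1; simp only [hl'def] at this ⊢; linarith,
    by have := hy.2; simp only [hu'def] at this ⊢; linarith⟩
  exact (hsub this).1

lemma eq_of_kl (ν μ : Measure ℝ) [IsProbabilityMeasure ν] [IsProbabilityMeasure μ]
    (hac : ν ≪ μ) (hint : Integrable (fun x => Real.log (ν.rnDeriv μ x).toReal) ν)
    (hle : ∫ x, Real.log (ν.rnDeriv μ x).toReal ∂ν ≤ 0) : ν = μ := by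
  set f := ν.rnDeriv μ with hfdef
  have hfm : Measurable f := Measure.measurable_rnDeriv ν μ
  have hwd : μ.withDensity f = ν := Measure.withDensity_rnDeriv_eq ν μ hac
  set S : Set ℝ := {x | f x ≠ 0 ∧ f x ≠ ∞} with hSdef
  have hSm : MeasurableSet S := by
    have h1 : MeasurableSet {x | f x ≠ 0} := (hfm (measurableSet_singleton 0)).compl
    have h2 : MeasurableSet {x | f x ≠ ∞} := (hfm (measurableSet_singleton ∞)).compl
    exact h1.inter h2
  -- lintegral of f⁻¹ w.r.t. ν
  have hlin : ∫⁻ x, (f x)⁻¹ ∂ν = μ S := by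
    rw [← hwd, lintegral_withDensity_eq_lintegral_mul μ hfm (show Measurable fun x => (f x)⁻¹ from hfm.inv)]
    have : (f * fun x => (f x)⁻¹) = S.indicator (fun _ => (1 : ℝ≥0∞)) := by
      funext x
      simp only [Pi.mul_apply, Pi.inv_apply, Set.indicator_apply]
      by_cases h0 : f x = 0
      · simp [h0, hSdef]
      by_cases htop : f x = ∞
      · simp [htop, hSdef]
      · rw [ENNReal.mul_inv_cancel h0 htop, if_pos (by exact ⟨h0, htop⟩)]
    rw [this, lintegral_indicator hSm, setLIntegral_one]
  have hSle : μ S ≤ 1 := prob_le_one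
  have hpos : ∀ᵐ x ∂ν, 0 < f x := Measure.rnDeriv_pos hac
  have hfin : ∀ᵐ x ∂ν, f x < ∞ :=
    (Measure.rnDeriv_lt_top ν μ).filter_mono hac.ae_le
  have hinv_int : Integrable (fun x => ((f x)⁻¹).toReal) ν := by
    apply integrable_toReal_of_lintegral_ne_top (show Measurable fun x => (f x)⁻¹ from hfm.inv).aemeasurable
    rw [hlin]; exact (lt_of_le_of_lt hSle ENNReal.one_lt_top).ne
  have hinv_val : ∫ x, ((f x)⁻¹).toReal ∂ν = (μ S).toReal := by
    rw [integral_toReal (show Measurable fun x => (f x)⁻¹ from hfm.inv).aemeasurable, hlin]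
    filter_upwards [hpos] with x hx
    exact ENNReal.inv_lt_top.2 hx
  set w : ℝ → ℝ := fun x => ((f x)⁻¹).toReal + Real.log (f x).toReal - 1 with hwdef
  have hw_int : Integrable w ν := (hinv_int.add hint).sub (integrable_const 1)
  have hkey : ∀ᵐ x ∂ν, 0 < (f x).toReal := by
    filter_upwards [hpos, hfin] with x h1 h2
    exact ENNReal.toReal_pos h1.ne' h2.ne
  have hw_nonneg : 0 ≤ᵐ[ν] w := by
    filter_upwards [hkey] with x hx
    have h1 : Real.log ((f x).toReal)⁻¹ ≤ ((f x).toReal)⁻¹ - 1 :=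
      Real.log_le_sub_one_of_pos (inv_pos.2 hx)
    rw [Real.log_inv] at h1
    simp only [Pi.zero_apply, hwdef, ENNReal.toReal_inv]
    linarith
  have hw_eq : ∫ x, w x ∂ν = (μ S).toReal - 1 + ∫ x, Real.log (f x).toReal ∂ν := by
    have hsum : Integrable (fun x => ((f x)⁻¹).toReal + Real.log (f x).toReal) ν :=
      hinv_int.add hint
    simp only [hwdef]
    rw [integral_sub hsum (integrable_const 1),
      integral_add hinv_int hint, hinv_val, integral_const]
    simp
    ring
  have hμStoReal : (μ S).toReal ≤ 1 := by
    simpa using ENNReal.toReal_mono ENNReal.one_ne_top hSle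
  have hw0 : ∫ x, w x ∂ν = 0 := by
    have h1 : 0 ≤ ∫ x, w x ∂ν := integral_nonneg_of_ae hw_nonneg
    have h2 : ∫ x, w x ∂ν ≤ 0 := by rw [hw_eq]; linarith
    linarith
  have hweq : w =ᵐ[ν] 0 := (integral_eq_zero_iff_of_nonneg_ae hw_nonneg hw_int).1 hw0
  -- f = 1 a.e. ν
  have hfν : ∀ᵐ x ∂ν, f x = 1 := by
    filter_upwards [hweq, hkey, hfin] with x hw0x hgx hfinx
    have hg : (f x).toReal = 1 := by
      by_contra hne
      have hinvne : ((f x).toReal)⁻¹ ≠ 1 := by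
        intro h; exact hne (by field_simp at h; linarith)
      have := Real.log_lt_sub_one_of_pos (inv_pos.2 hgx) hinvne
      rw [Real.log_inv] at this
      have : 0 < w x := by
        simp only [hwdef, ENNReal.toReal_inv]; linarith
      rw [hw0x] at this; exact lt_irrefl _ this
    rw [← ENNReal.toReal_eq_one_iff]; exact hg
  -- f = 1 a.e. μ
  have hνset : ν {x | f x ≠ 1} = 0 := by
    rw [ae_iff] at hfν; exact hfν
  have hT : MeasurableSet {x | f x ≠ 1} := (hfm (measurableSet_singleton 1)).compl
  have hlT : ∫⁻ x in {x | f x ≠ 1}, f x ∂μ = 0 := by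
    rw [← hwd, withDensity_apply _ hT] at hνset; exact hνset
  have hf0T : μ ({x | f x ≠ 0} ∩ {x | f x ≠ 1}) = 0 := by
    have h2 := (lintegral_eq_zero_iff hfm).1 hlT
    rw [Filter.EventuallyEq, ae_iff] at h2
    have hm0 : MeasurableSet {a : ℝ | ¬ f a = (0 : ℝ → ℝ≥0∞) a} :=
      (hfm (measurableSet_singleton 0)).compl
    rw [Measure.restrict_apply hm0] at h2
    exact h2
  have hScompl : μ Sᶜ = 0 := by
    have hμS : μ S = 1 := by
      rw [← ENNReal.toReal_eq_one_iff]
      have hge : (1:ℝ) ≤ (μ S).toReal := by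
        have h2 : ∫ x, w x ∂ν ≤ (μ S).toReal - 1 := by rw [hw_eq]; linarith
        rw [hw0] at h2; linarith
      linarith
    rw [measure_compl hSm (measure_ne_top μ S), hμS, measure_univ, tsub_self]
  have hfμ : f =ᵐ[μ] 1 := by
    rw [Filter.EventuallyEq, ae_iff]
    refine measure_mono_null ?_ (measure_union_null hf0T hScompl)
    · intro x hx
      simp only [Set.mem_setOf_eq, Pi.one_apply] at hx
      by_cases h0 : f x = 0
      · right; simp [hSdef, h0]
      · left; exact ⟨h0, hx⟩
  rw [← hwd, withDensity_congr_ae hfμ, withDensity_one]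

lemma Eset_semicircle : Eset semicircle = ∅ :=
  Set.diff_eq_empty.2 msupport_semicircle_subset

lemma inS1_semicircle : inS1 semicircle :=
  ⟨Icc_subset_msupport_sc, by rw [Eset_semicircle]; exact Set.countable_empty⟩

/-- **The rate function of Theorem 2.1 vanishes exactly at the semicircle law.**
For a compactly supported probability measure `μ` on `ℝ`,
`I(μ) = K(μ_sc|μ) + Σ_{λ∈E(μ)} F(λ)` (for `μ ∈ S_1([-2,2])`, `+∞` otherwise) is zero
if and only if `μ = μ_sc`. -/
theorem rate_zero_iff_semicircle (μ : Measure ℝ) (hμ : IsProbabilityMeasure μ)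
    (hcs : ∃ K : Set ℝ, IsCompact K ∧ μ Kᶜ = 0) :
    rateSpec μ = 0 ↔ μ = semicircle := by
  constructor
  · intro h
    rw [rateSpec] at h
    split_ifs at h with hS
    · have hK : KLdiv semicircle μ = 0 := (add_eq_zero.1 h).1
      rw [KLdiv] at hK
      split_ifs at hK with hc
      · obtain ⟨hac, hint⟩ := hc
        have hle : ∫ x, Real.log ((semicircle.rnDeriv μ) x).toReal ∂semicircle ≤ 0 := by
          rwa [ENNReal.ofReal_eq_zero] at hK
        exact (eq_of_kl semicircle μ hac hint hle).symm
      · exact absurd hK (by simp)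
    · exact absurd h (by simp)
  · intro h
    subst h
    rw [rateSpec, if_pos inS1_semicircle]
    have hrn := Measure.rnDeriv_self (μ := semicircle)
    have hlog : (fun x => Real.log ((semicircle.rnDeriv semicircle) x).toReal)
        =ᵐ[semicircle] 0 := by
      filter_upwards [hrn] with x hx
      simp [hx]
    have hint : Integrable (fun x => Real.log ((semicircle.rnDeriv semicircle) x).toReal)
        semicircle := (integrable_zero _ _ _).congr hlog.symm
    have hK : KLdiv semicircle semicircle = 0 := by
      rw [KLdiv, if_pos ⟨Measure.AbsolutelyContinuous.rfl, hint⟩]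
      rw [integral_congr_ae hlog]
      simp
    have hE : IsEmpty ↥(Eset semicircle) := Set.isEmpty_coe_sort.2 Eset_semicircle
    have hT : ∑' x : (Eset semicircle), ENNReal.ofReal (Fout x) = 0 :=
      ENNReal.tsum_eq_zero.2 fun x => (hE.false x).elim
    rw [hK, hT, add_zero]

end
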